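/- Under the β-order neighborhood model with |Y_i(z)| ≤ Y_max for all i and z, independent Bernoulli treatments with p_j ∈ [p, 1−p], maximum in-degree d_in and out-degree d_out, the variance of the SNIPE estimator is at most (d_in · d_out · Y_max² / n) · ( (e·d_in/β) · max(4β², 1/(p(1−p))) )^β. -/

import Mathlib

open Finset Real

/-- Value of a Bernoulli treatment bit as a real number. -/
noncomputable def zval : Bool → ℝ := fun b => if b then 1 else 0

/-- Expectation of `f` under `n` mutually independent Bernoulli(`p j`) bits. -/
noncomputable def bexp {n : ℕ} (p : Fin n → ℝ) (f : (Fin n → Bool) → ℝ) : ℝ :=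
  ∑ z : Fin n → Bool, (∏ j, if z j then p j else 1 - p j) * f z

/-- The SNIPE coefficient function `g`. -/
noncomputable def gcoef {n : ℕ} (p : Fin n → ℝ) (S : Finset (Fin n)) : ℝ :=
  if S.Nonempty then (∏ s ∈ S, (1 - p s)) - ∏ s ∈ S, (-p s) else 0

noncomputable def wt {n : ℕ} (p : Fin n → ℝ) (z : Fin n → Bool) : ℝ :=
  ∏ j, if z j then p j else 1 - p j

lemma bexp_eq {n : ℕ} (p : Fin n → ℝ) (f : (Fin n → Bool) → ℝ) :
    bexp p f = ∑ z : Fin n → Bool, wt p z * f z := rfl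

lemma bexp_congr {n : ℕ} (p : Fin n → ℝ) (f g : (Fin n → Bool) → ℝ)
    (h : ∀ z, f z = g z) : bexp p f = bexp p g :=
  congrArg (bexp p) (funext h)

lemma bexp_prod {n : ℕ} (p : Fin n → ℝ) (T : Finset (Fin n)) (F : Fin n → Bool → ℝ) :
    bexp p (fun z => ∏ j ∈ T, F j (z j)) =
      ∏ j ∈ T, (p j * F j true + (1 - p j) * F j false) := by
  unfold bexp
  have h1 : ∀ z : Fin n → Bool,
      (∏ j, if z j then p j else 1 - p j) * ∏ j ∈ T, F j (z j)
      = ∏ j, ((if z j then p j else 1 - p j) * (if j ∈ T then F j (z j) else 1)) := by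
    intro z
    rw [Finset.prod_mul_distrib]
    congr 1
    rw [← Finset.prod_subset (Finset.subset_univ T) (fun x _ hx => if_neg hx)]
    exact Finset.prod_congr rfl fun j hj => (if_pos hj).symm
  simp only [h1]
  have h2 := Finset.prod_univ_sum (fun _ : Fin n => (Finset.univ : Finset Bool))
      (fun j b => (if b then p j else 1 - p j) * (if j ∈ T then F j b else 1))
  rw [Fintype.piFinset_univ] at h2
  rw [← h2]
  have h3 : ∀ x ∈ Finset.univ, x ∉ T →
      (∑ b : Bool, (if b then p x else 1 - p x) * (if x ∈ T then F x b else 1)) = 1 := by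
    intro x _ hx
    simp only [Fintype.sum_bool, if_neg hx, mul_one]
    norm_num
  rw [← Finset.prod_subset (Finset.subset_univ T) h3]
  exact Finset.prod_congr rfl fun j hj => by simp [Fintype.sum_bool, hj]

lemma wt_sum_one {n : ℕ} (p : Fin n → ℝ) : ∑ z : Fin n → Bool, wt p z = 1 := by
  have := bexp_prod p ∅ (fun _ _ => 1)
  simpa [bexp_eq, wt] using this

lemma bexp_sum {n : ℕ} {ι : Type*} (p : Fin n → ℝ) (s : Finset ι)
    (f : ι → (Fin n → Bool) → ℝ) :
    bexp p (fun z => ∑ i ∈ s, f i z) = ∑ i ∈ s, bexp p (f i) := by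
  unfold bexp; simp_rw [Finset.mul_sum]; rw [Finset.sum_comm]

lemma bexp_const_mul {n : ℕ} (p : Fin n → ℝ) (a : ℝ) (f : (Fin n → Bool) → ℝ) :
    bexp p (fun z => a * f z) = a * bexp p f := by
  unfold bexp; rw [Finset.mul_sum]; exact Finset.sum_congr rfl fun z _ => by ring

lemma bexp_const {n : ℕ} (p : Fin n → ℝ) (a : ℝ) : bexp p (fun _ => a) = a := by
  rw [bexp_eq, ← Finset.sum_mul, wt_sum_one, one_mul]

lemma bexp_sub {n : ℕ} (p : Fin n → ℝ) (f g : (Fin n → Bool) → ℝ) :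
    bexp p (fun z => f z - g z) = bexp p f - bexp p g := by
  unfold bexp; rw [← Finset.sum_sub_distrib]
  exact Finset.sum_congr rfl fun z _ => by ring

lemma wt_nonneg {n : ℕ} {p : Fin n → ℝ} (hp : ∀ j, 0 ≤ p j ∧ p j ≤ 1) (z : Fin n → Bool) :
    0 ≤ wt p z := by
  refine Finset.prod_nonneg fun j _ => ?_
  rcases (hp j) with ⟨h1, h2⟩
  by_cases h : z j <;> simp [h] <;> linarith

lemma bexp_mono {n : ℕ} {p : Fin n → ℝ} (hp : ∀ j, 0 ≤ p j ∧ p j ≤ 1)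
    {f g : (Fin n → Bool) → ℝ} (h : ∀ z, f z ≤ g z) : bexp p f ≤ bexp p g :=
  Finset.sum_le_sum fun z _ => mul_le_mul_of_nonneg_left (h z) (wt_nonneg hp z)

lemma bexp_nonneg {n : ℕ} {p : Fin n → ℝ} (hp : ∀ j, 0 ≤ p j ∧ p j ≤ 1)
    {f : (Fin n → Bool) → ℝ} (h : ∀ z, 0 ≤ f z) : 0 ≤ bexp p f := by
  have := bexp_mono hp (f := fun _ => 0) (g := f) h
  simpa [bexp] using this

lemma bexp_cauchy {n : ℕ} {p : Fin n → ℝ} (hp : ∀ j, 0 ≤ p j ∧ p j ≤ 1)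
    (f g : (Fin n → Bool) → ℝ) :
    (bexp p (fun z => f z * g z)) ^ 2 ≤
      bexp p (fun z => f z ^ 2) * bexp p (fun z => g z ^ 2) := by
  have key := Finset.sum_mul_sq_le_sq_mul_sq Finset.univ
      (fun z : Fin n → Bool => Real.sqrt (wt p z) * f z)
      (fun z : Fin n → Bool => Real.sqrt (wt p z) * g z)
  have hw : ∀ z : Fin n → Bool, Real.sqrt (wt p z) * Real.sqrt (wt p z) = wt p z :=
    fun z => Real.mul_self_sqrt (wt_nonneg hp z)
  calc (bexp p (fun z => f z * g z)) ^ 2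
      = (∑ z : Fin n → Bool, (Real.sqrt (wt p z) * f z) * (Real.sqrt (wt p z) * g z)) ^ 2 := by
        rw [bexp_eq]; congr 1
        exact Finset.sum_congr rfl fun z _ => by rw [mul_mul_mul_comm, hw z]
    _ ≤ (∑ z : Fin n → Bool, (Real.sqrt (wt p z) * f z) ^ 2) *
        (∑ z : Fin n → Bool, (Real.sqrt (wt p z) * g z) ^ 2) := key
    _ = bexp p (fun z => f z ^ 2) * bexp p (fun z => g z ^ 2) := by
        rw [bexp_eq, bexp_eq]
        congr 1 <;> exact Finset.sum_congr rfl fun z _ => by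
          rw [mul_pow, Real.sq_sqrt (wt_nonneg hp z)]

lemma bexp_indep {n : ℕ} (p : Fin n → ℝ) (A : Finset (Fin n))
    (f g : (Fin n → Bool) → ℝ)
    (hf : ∀ z z' : Fin n → Bool, (∀ j ∈ A, z j = z' j) → f z = f z')
    (hg : ∀ z z' : Fin n → Bool, (∀ j ∉ A, z j = z' j) → g z = g z') :
    bexp p (fun z => f z * g z) = bexp p f * bexp p g := by
  classical
  set c : (Fin n → Bool) → (Fin n → Bool) → (Fin n → Bool) :=
    fun u v j => if j ∈ A then u j else v j with hc
  have key : ∀ u v : Fin n → Bool,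
      wt p (c u v) * wt p (c v u) = wt p u * wt p v := by
    intro u v
    unfold wt
    rw [← Finset.prod_mul_distrib, ← Finset.prod_mul_distrib]
    refine Finset.prod_congr rfl fun j _ => ?_
    by_cases h : j ∈ A <;> simp [hc, h, mul_comm]
  have hfc : ∀ u v, f (c u v) = f u := fun u v => (hf _ _ (fun j hj => by simp [hc, hj])).symm
  have hgc : ∀ u v, g (c u v) = g v := fun u v => (hg _ _ (fun j hj => by simp [hc, hj])).symm
  set Φ : ((Fin n → Bool) × (Fin n → Bool)) → ((Fin n → Bool) × (Fin n → Bool)) :=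
    fun x => (c x.1 x.2, c x.2 x.1) with hΦ
  have hinv : Function.Involutive Φ := by
    intro x
    have h1 : ∀ u v : Fin n → Bool, c (c u v) (c v u) = u := by
      intro u v; funext j; by_cases h : j ∈ A <;> simp [hc, h]
    simp [hΦ, h1]
  have hbij : Function.Bijective Φ := hinv.bijective
  have main : (∑ x : (Fin n → Bool) × (Fin n → Bool), wt p x.1 * wt p x.2 * (f x.1 * g x.2))
      = ∑ x : (Fin n → Bool) × (Fin n → Bool), wt p x.1 * wt p x.2 * (f x.1 * g x.1) := by
    refine Fintype.sum_bijective Φ hbij _ _ fun x => ?_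
    simp only [hΦ]
    rw [key, hfc, hgc]
  have expand : bexp p f * bexp p g
      = ∑ x : (Fin n → Bool) × (Fin n → Bool), wt p x.1 * wt p x.2 * (f x.1 * g x.2) := by
    rw [bexp_eq, bexp_eq, Finset.sum_mul_sum, Fintype.sum_prod_type]
    refine Finset.sum_congr rfl fun u _ => Finset.sum_congr rfl fun v _ => by ring
  rw [expand, main, Fintype.sum_prod_type]
  rw [bexp_eq]
  refine Finset.sum_congr rfl fun u _ => ?_
  have h4 : ∑ y : Fin n → Bool, wt p (u, y).1 * wt p (u, y).2 * (f (u, y).1 * g (u, y).1)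
      = (∑ y : Fin n → Bool, wt p y) * (wt p u * (f u * g u)) := by
    rw [Finset.sum_mul]
    exact Finset.sum_congr rfl fun y _ => by ring
  rw [h4, wt_sum_one, one_mul]

lemma bexp_W {n : ℕ} (p : Fin n → ℝ) (hp : ∀ j, 0 < p j ∧ p j < 1) (S S' : Finset (Fin n)) :
    bexp p (fun z => (∏ j ∈ S, ((zval (z j) - p j) / (p j * (1 - p j)))) *
                     (∏ j ∈ S', ((zval (z j) - p j) / (p j * (1 - p j))))) =
    (if S = S' then ∏ j ∈ S, (1 / (p j * (1 - p j))) else 0) := by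
  classical
  set W : Fin n → Bool → ℝ := fun j b => (zval b - p j) / (p j * (1 - p j)) with hW
  set G : Fin n → Bool → ℝ :=
    fun j b => (if j ∈ S then W j b else 1) * (if j ∈ S' then W j b else 1) with hG
  have pt : ∀ z : Fin n → Bool,
      (∏ j ∈ S, W j (z j)) * (∏ j ∈ S', W j (z j)) = ∏ j ∈ S ∪ S', G j (z j) := by
    intro z
    rw [hG]
    rw [Finset.prod_mul_distrib]
    congr 1
    · rw [← Finset.prod_subset Finset.subset_union_left (fun x _ hx => if_neg hx)]
      exact Finset.prod_congr rfl fun j hj => (if_pos hj).symm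
    · rw [← Finset.prod_subset Finset.subset_union_right (fun x _ hx => if_neg hx)]
      exact Finset.prod_congr rfl fun j hj => (if_pos hj).symm
  rw [bexp_congr p _ _ pt, bexp_prod]
  have hne : ∀ j : Fin n, p j ≠ 0 ∧ (1 - p j) ≠ 0 := fun j =>
    ⟨ne_of_gt (hp j).1, ne_of_gt (by linarith [(hp j).2])⟩
  by_cases hSS : S = S'
  · subst hSS
    rw [if_pos rfl, Finset.union_self]
    refine Finset.prod_congr rfl fun j hj => ?_
    rw [hG]
    simp only [if_pos hj, hW, zval]
    have h1 := (hne j).1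
    have h2 := (hne j).2
    field_simp
    simp only [if_true, Bool.false_eq_true, if_false]
    ring
  · rw [if_neg hSS]
    have hex : ∃ j ∈ S ∪ S', (j ∈ S ∧ j ∉ S') ∨ (j ∈ S' ∧ j ∉ S) := by
      by_contra h
      push_neg at h
      apply hSS
      ext a
      constructor
      · intro ha
        exact (h a (Finset.mem_union_left _ ha)).1 ha
      · intro ha
        exact (h a (Finset.mem_union_right _ ha)).2 ha
    obtain ⟨j, hjU, hj⟩ := hex
    refine Finset.prod_eq_zero hjU ?_
    have h1 := (hne j).1
    have h2 := (hne j).2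
    rcases hj with ⟨hj1, hj2⟩ | ⟨hj1, hj2⟩ <;>
    · rw [hG]
      simp only [if_pos hj1, if_neg hj2, hW, zval]
      field_simp
      simp only [if_true, Bool.false_eq_true, if_false]
      ring

lemma lemA (d β : ℕ) (hd : 1 ≤ d) (hb : 1 ≤ β) (M : ℝ) (hM1 : 1 ≤ M) (hMb : (β:ℝ) ≤ M) :
    ∑ k ∈ Finset.range (β+1), (d.choose k : ℝ) * M ^ k ≤ ((Real.exp 1 * d / β) * M) ^ β := by
  have hd0 : (0:ℝ) < d := by exact_mod_cast hd
  have hb0 : (0:ℝ) < β := by exact_mod_cast hb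
  have hM0 : (0:ℝ) < M := lt_of_lt_of_le one_pos hM1
  have hdM : (1:ℝ) ≤ (d:ℝ) * M / β := by
    rw [le_div_iff₀ hb0, one_mul]
    calc (β:ℝ) ≤ M := hMb
    _ ≤ (d:ℝ) * M := le_mul_of_one_le_left hM0.le (by exact_mod_cast hd)
  have step1 : ∀ k ∈ Finset.range (β+1), (d.choose k:ℝ) * M^k ≤
      ((d:ℝ)*M/β)^β * ((d.choose k:ℝ) * ((β:ℝ)/d)^k) := by
    intro k hk
    have hk' : k ≤ β := Nat.lt_succ_iff.mp (Finset.mem_range.mp hk)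
    have e0 : ((d:ℝ)*M/β) * ((β:ℝ)/d) = M := by field_simp
    have e1 : ((d:ℝ)*M/β)^β * ((β:ℝ)/d)^k = M^k * ((d:ℝ)*M/β)^(β-k) := by
      calc ((d:ℝ)*M/β)^β * ((β:ℝ)/d)^k
          = ((d:ℝ)*M/β)^k * ((d:ℝ)*M/β)^(β-k) * ((β:ℝ)/d)^k := by
            rw [← pow_add, Nat.add_sub_cancel' hk']
        _ = (((d:ℝ)*M/β) * ((β:ℝ)/d))^k * ((d:ℝ)*M/β)^(β-k) := by rw [mul_pow]; ring
        _ = M^k * ((d:ℝ)*M/β)^(β-k) := by rw [e0]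
    have e2 : (1:ℝ) ≤ ((d:ℝ)*M/β)^(β-k) := one_le_pow₀ hdM
    calc (d.choose k:ℝ) * M^k ≤ (d.choose k:ℝ) * (M^k * ((d:ℝ)*M/β)^(β-k)) := by
          exact mul_le_mul_of_nonneg_left
            (le_mul_of_one_le_right (pow_nonneg hM0.le k) e2)
            (Nat.cast_nonneg (d.choose k))
      _ = ((d:ℝ)*M/β)^β * ((d.choose k:ℝ) * ((β:ℝ)/d)^k) := by rw [← e1]; ring
  have step2 : ∑ k ∈ Finset.range (β+1), (d.choose k:ℝ) * ((β:ℝ)/d)^k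
      ≤ (1 + (β:ℝ)/d)^d := by
    have ht : (0:ℝ) ≤ (β:ℝ)/d := by positivity
    have sub1 : ∑ k ∈ Finset.range (β+1), (d.choose k:ℝ) * ((β:ℝ)/d)^k
        ≤ ∑ k ∈ Finset.range (β+d+1), (d.choose k:ℝ) * ((β:ℝ)/d)^k := by
      refine Finset.sum_le_sum_of_subset_of_nonneg (Finset.range_subset_range.mpr (by omega)) ?_
      intro k _ _; positivity
    have eq1 : ∑ k ∈ Finset.range (β+d+1), (d.choose k:ℝ) * ((β:ℝ)/d)^k
        = ∑ k ∈ Finset.range (d+1), (d.choose k:ℝ) * ((β:ℝ)/d)^k := by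
      symm
      refine Finset.sum_subset (Finset.range_subset_range.mpr (by omega)) ?_
      intro k _ hk
      have hdk : d < k := by
        simp only [Finset.mem_range, not_lt] at hk ⊢
        omega
      simp [Nat.choose_eq_zero_of_lt hdk]
    have binom : ∑ k ∈ Finset.range (d+1), (d.choose k:ℝ) * ((β:ℝ)/d)^k
        = (1 + (β:ℝ)/d)^d := by
      rw [add_comm (1:ℝ), add_pow]
      exact Finset.sum_congr rfl fun k _ => by ring
    rw [← binom, ← eq1]; exact sub1
  have step3 : (1 + (β:ℝ)/d)^d ≤ Real.exp 1 ^ β := by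
    have h1 : (1 + (β:ℝ)/d) ≤ Real.exp ((β:ℝ)/d) := by
      have := Real.add_one_le_exp ((β:ℝ)/d); linarith
    have h2 : (1 + (β:ℝ)/d)^d ≤ (Real.exp ((β:ℝ)/d))^d :=
      pow_le_pow_left₀ (by positivity) h1 d
    have h3 : (Real.exp ((β:ℝ)/d))^d = Real.exp 1 ^ β := by
      rw [← Real.exp_nat_mul]
      have : (d:ℝ) * ((β:ℝ)/d) = (β:ℝ) := by field_simp
      rw [this, ← Real.exp_one_rpow (β:ℝ), Real.rpow_natCast]
    rw [← h3]; exact h2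
  calc ∑ k ∈ Finset.range (β+1), (d.choose k : ℝ) * M ^ k
      ≤ ∑ k ∈ Finset.range (β+1), ((d:ℝ)*M/β)^β * ((d.choose k:ℝ) * ((β:ℝ)/d)^k) :=
        Finset.sum_le_sum step1
    _ = ((d:ℝ)*M/β)^β * ∑ k ∈ Finset.range (β+1), (d.choose k:ℝ) * ((β:ℝ)/d)^k := by
        rw [Finset.mul_sum]
    _ ≤ ((d:ℝ)*M/β)^β * ((1 + (β:ℝ)/d)^d) := by
        refine mul_le_mul_of_nonneg_left step2 (by positivity)
    _ ≤ ((d:ℝ)*M/β)^β * (Real.exp 1 ^ β) := mul_le_mul_of_nonneg_left step3 (by positivity)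
    _ = ((Real.exp 1 * d / β) * M) ^ β := by rw [← mul_pow]; congr 1; ring

lemma var_main {n : ℕ} (p : Fin n → ℝ) (hp01 : ∀ j, 0 ≤ p j ∧ p j ≤ 1)
    (N : Fin n → Finset (Fin n)) (X : Fin n → (Fin n → Bool) → ℝ)
    (hdep : ∀ i, ∀ z z' : Fin n → Bool, (∀ j ∈ N i, z j = z' j) → X i z = X i z')
    (K D : ℝ) (hK : 0 ≤ K)
    (hs2 : ∀ i, bexp p (fun z => X i z ^ 2) ≤ K)
    (hcard : ∀ i, (((Finset.univ.filter
        (fun i' => (N i ∩ N i').Nonempty)).card : ℝ)) ≤ D) :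
    bexp p (fun z => ((1/(n:ℝ)) * ∑ i, X i z)^2)
      - (bexp p (fun z => (1/(n:ℝ)) * ∑ i, X i z))^2
    ≤ (1/(n:ℝ))^2 * ((n:ℝ) * (D * K)) := by
  classical
  set m : Fin n → ℝ := fun i => bexp p (X i) with hm
  set E2 : Fin n → Fin n → ℝ := fun i i' => bexp p (fun z => X i z * X i' z) with hE2
  set Cov : Fin n → Fin n → ℝ := fun i i' => E2 i i' - m i * m i' with hCov
  have stepA : bexp p (fun z => ((1/(n:ℝ)) * ∑ i, X i z)^2)
      = (1/(n:ℝ))^2 * ∑ i, ∑ i', E2 i i' := by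
    have e1 : ∀ z : Fin n → Bool, ((1/(n:ℝ)) * ∑ i, X i z)^2
        = (1/(n:ℝ))^2 * ∑ i, ∑ i', X i z * X i' z := by
      intro z; rw [← Finset.sum_mul_sum]; ring
    rw [bexp_congr p _ _ e1, bexp_const_mul]
    congr 1
    rw [bexp_sum]
    refine Finset.sum_congr rfl fun i _ => ?_
    rw [bexp_sum]
  have stepB : bexp p (fun z => (1/(n:ℝ)) * ∑ i, X i z) = (1/(n:ℝ)) * ∑ i, m i := by
    rw [bexp_const_mul]
    congr 1
    exact bexp_sum p Finset.univ X
  rw [stepA, stepB]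
  have e2 : ((1/(n:ℝ)) * ∑ i, m i)^2 = (1/(n:ℝ))^2 * ∑ i, ∑ i', m i * m i' := by
    rw [← Finset.sum_mul_sum]; ring
  rw [e2]
  have e3' : ∑ i, ∑ i', Cov i i' = (∑ i, ∑ i', E2 i i') - ∑ i, ∑ i', m i * m i' := by
    simp only [hCov]
    simp_rw [Finset.sum_sub_distrib]
  have e3 : (1/(n:ℝ))^2 * (∑ i, ∑ i', E2 i i') - (1/(n:ℝ))^2 * (∑ i, ∑ i', m i * m i')
      = (1/(n:ℝ))^2 * ∑ i, ∑ i', Cov i i' := by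
    rw [e3']; ring
  rw [e3]
  have hvar_le : ∀ i, bexp p (fun z => (X i z - m i)^2) ≤ K := by
    intro i
    have expand : bexp p (fun z => (X i z - m i)^2)
        = bexp p (fun z => X i z ^ 2) - m i ^ 2 := by
      have e4 : ∀ z : Fin n → Bool, (X i z - m i)^2
          = X i z ^ 2 - (2 * m i * X i z - m i ^ 2) := by intro z; ring
      rw [bexp_congr p _ _ e4, bexp_sub, bexp_sub, bexp_const_mul, bexp_const]
      simp only [hm]
      ring
    have := hs2 i
    nlinarith [sq_nonneg (m i)]
  have hvar_nonneg : ∀ i, 0 ≤ bexp p (fun z => (X i z - m i)^2) :=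
    fun i => bexp_nonneg hp01 fun z => sq_nonneg _
  have hCovK : ∀ i i', Cov i i' ≤ K := by
    intro i i'
    have ecov : bexp p (fun z => (X i z - m i) * (X i' z - m i')) = Cov i i' := by
      have e5 : ∀ z : Fin n → Bool, (X i z - m i) * (X i' z - m i')
          = (X i z * X i' z - m i' * X i z) - (m i * X i' z - m i * m i') := by
        intro z; ring
      rw [bexp_congr p _ _ e5, bexp_sub, bexp_sub, bexp_sub, bexp_const_mul,
        bexp_const_mul, bexp_const]
      simp only [hCov, hE2, hm]
      ring
    have cs := bexp_cauchy hp01 (fun z => X i z - m i) (fun z => X i' z - m i')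
    rw [ecov] at cs
    nlinarith [hvar_le i, hvar_le i', hvar_nonneg i, hvar_nonneg i']
  have hCov0 : ∀ i i', ¬ (N i ∩ N i').Nonempty → Cov i i' = 0 := by
    intro i i' hd
    have hdisj : ∀ j, j ∈ N i' → j ∉ N i := by
      intro j hj1 hj2
      exact hd ⟨j, Finset.mem_inter.mpr ⟨hj2, hj1⟩⟩
    have := bexp_indep p (N i) (X i) (X i') (hdep i)
      (fun z z' hz => hdep i' z z' (fun j hj => hz j (hdisj j hj)))
    simp only [hCov, hE2, hm, this]
    ring
  have hsum_i : ∀ i, ∑ i', Cov i i' ≤ D * K := by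
    intro i
    rw [← Finset.sum_filter_add_sum_filter_not Finset.univ
        (fun i' => (N i ∩ N i').Nonempty) (fun i' => Cov i i')]
    have h2 : ∑ i' ∈ Finset.univ.filter (fun i' => ¬ (N i ∩ N i').Nonempty), Cov i i' = 0 :=
      Finset.sum_eq_zero fun i' hi' => hCov0 i i' (Finset.mem_filter.mp hi').2
    rw [h2, add_zero]
    calc ∑ i' ∈ Finset.univ.filter (fun i' => (N i ∩ N i').Nonempty), Cov i i'
        ≤ ∑ i' ∈ Finset.univ.filter (fun i' => (N i ∩ N i').Nonempty), K :=
          Finset.sum_le_sum fun i' _ => hCovK i i'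
      _ = ((Finset.univ.filter (fun i' => (N i ∩ N i').Nonempty)).card : ℝ) * K := by
          rw [Finset.sum_const, nsmul_eq_mul]
      _ ≤ D * K := mul_le_mul_of_nonneg_right (hcard i) hK
  have hsum : ∑ i, ∑ i', Cov i i' ≤ (n:ℝ) * (D * K) := by
    calc ∑ i, ∑ i', Cov i i' ≤ ∑ _i : Fin n, D * K := Finset.sum_le_sum fun i _ => hsum_i i
      _ = (n:ℝ) * (D * K) := by
          rw [Finset.sum_const, nsmul_eq_mul, Finset.card_univ, Fintype.card_fin]
  exact mul_le_mul_of_nonneg_left hsum (by positivity)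

lemma gcoef_sq_le_one {n : ℕ} (p : Fin n → ℝ) (hp01 : ∀ j, 0 ≤ p j ∧ p j ≤ 1)
    (S : Finset (Fin n)) : (gcoef p S)^2 ≤ 1 := by
  unfold gcoef
  split
  case isTrue h =>
    obtain ⟨s0, hs0⟩ := h
    have hA0 : 0 ≤ ∏ s ∈ S, (1 - p s) :=
      Finset.prod_nonneg fun s _ => by linarith [(hp01 s).2]
    have h1 : ∏ s ∈ S, (1 - p s) ≤ 1 - p s0 := by
      rw [← Finset.mul_prod_erase S _ hs0]
      have hle : ∏ s ∈ S.erase s0, (1 - p s) ≤ 1 :=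
        Finset.prod_le_one (fun s _ => by linarith [(hp01 s).2])
          (fun s _ => by linarith [(hp01 s).1])
      exact mul_le_of_le_one_right (by linarith [(hp01 s0).2]) hle
    have h2 : |∏ s ∈ S, (-p s)| ≤ p s0 := by
      rw [Finset.abs_prod]
      have heq : ∀ s ∈ S, |(-p s)| = p s := fun s _ => by
        rw [abs_neg, abs_of_nonneg (hp01 s).1]
      rw [Finset.prod_congr rfl heq]
      rw [← Finset.mul_prod_erase S _ hs0]
      have hle : ∏ s ∈ S.erase s0, p s ≤ 1 :=
        Finset.prod_le_one (fun s _ => (hp01 s).1) (fun s _ => (hp01 s).2)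
      exact mul_le_of_le_one_right (hp01 s0).1 hle
    have h2' := abs_le.mp h2
    nlinarith [(hp01 s0).1, (hp01 s0).2, h2'.1, h2'.2]
  case isFalse h => norm_num

set_option maxHeartbeats 2000000 in
/-- Variance bound for the SNIPE estimator (Theorem 1 of the paper). -/
theorem stmt13 {n : ℕ} (hn : 0 < n) (p : Fin n → ℝ) (q : ℝ) (hq : 0 < q)
    (hq2 : q ≤ 1 / 2) (hp : ∀ j, q ≤ p j ∧ p j ≤ 1 - q)
    (N : Fin n → Finset (Fin n)) (β din dout : ℕ)
    (hdin : ∀ i, (N i).card ≤ din)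
    (hdout : ∀ j, (Finset.univ.filter (fun i => j ∈ N i)).card ≤ dout)
    (c : Fin n → Finset (Fin n) → ℝ) (Ymax : ℝ)
    (hY : ∀ i, ∑ S' ∈ (N i).powerset.filter (fun S => S.card ≤ β), |c i S'| ≤ Ymax) :
    bexp p (fun z => ((1 / (n : ℝ)) * ∑ i,
        (∑ S' ∈ (N i).powerset.filter (fun S => S.card ≤ β),
          c i S' * ∏ j ∈ S', zval (z j)) *
        (∑ S ∈ (N i).powerset.filter (fun S => S.card ≤ β),
          gcoef p S * ∏ j ∈ S, ((zval (z j) - p j) / (p j * (1 - p j))))) ^ 2)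
      - (bexp p (fun z => (1 / (n : ℝ)) * ∑ i,
        (∑ S' ∈ (N i).powerset.filter (fun S => S.card ≤ β),
          c i S' * ∏ j ∈ S', zval (z j)) *
        (∑ S ∈ (N i).powerset.filter (fun S => S.card ≤ β),
          gcoef p S * ∏ j ∈ S, ((zval (z j) - p j) / (p j * (1 - p j)))))) ^ 2
    ≤ ((din : ℝ) * (dout : ℝ) * Ymax ^ 2 / (n : ℝ)) *
        ((Real.exp 1 * (din : ℝ) / (β : ℝ)) *
          max (4 * (β : ℝ) ^ 2) (1 / (q * (1 - q)))) ^ β := by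
  classical
  have hq1 : q < 1 := lt_of_le_of_lt hq2 (by norm_num)
  have hq1' : 0 < 1 - q := by linarith
  have hp01 : ∀ j, 0 ≤ p j ∧ p j ≤ 1 := fun j =>
    ⟨le_trans hq.le (hp j).1, by linarith [(hp j).2]⟩
  have hp01' : ∀ j, 0 < p j ∧ p j < 1 := fun j =>
    ⟨lt_of_lt_of_le hq (hp j).1, by linarith [(hp j).2]⟩
  have hqq : 0 < q * (1 - q) := mul_pos hq hq1'
  set x : ℝ := 1 / (q * (1 - q)) with hx
  have hx4 : (4:ℝ) ≤ x := by
    rw [hx, le_div_iff₀ hqq]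
    nlinarith [sq_nonneg (2*q - 1)]
  have hx0 : 0 < x := by positivity
  by_cases hdeg : β = 0 ∨ din = 0
  · -- degenerate case: the estimator is identically zero
    have hzero : ∀ i (z : Fin n → Bool),
        (∑ S ∈ (N i).powerset.filter (fun S => S.card ≤ β),
          gcoef p S * ∏ j ∈ S, ((zval (z j) - p j) / (p j * (1 - p j)))) = 0 := by
      intro i z
      refine Finset.sum_eq_zero fun S hS => ?_
      rw [Finset.mem_filter, Finset.mem_powerset] at hS
      have hSempty : S = ∅ := by
        rcases hdeg with h | h
        · rw [← Finset.card_eq_zero]; omega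
        · have h2 := hdin i
          have h3 : N i = ∅ := Finset.card_eq_zero.mp (by omega)
          rw [h3, Finset.subset_empty] at hS
          exact hS.1
      rw [hSempty]
      simp [gcoef]
    have hfz : ∀ z : Fin n → Bool, ((1 / (n : ℝ)) * ∑ i,
        (∑ S' ∈ (N i).powerset.filter (fun S => S.card ≤ β),
          c i S' * ∏ j ∈ S', zval (z j)) *
        (∑ S ∈ (N i).powerset.filter (fun S => S.card ≤ β),
          gcoef p S * ∏ j ∈ S, ((zval (z j) - p j) / (p j * (1 - p j))))) = 0 := by
      intro z
      rw [Finset.sum_eq_zero fun i _ => by rw [hzero i z, mul_zero]]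
      rw [mul_zero]
    have hL1 : bexp p (fun z => ((1 / (n : ℝ)) * ∑ i,
        (∑ S' ∈ (N i).powerset.filter (fun S => S.card ≤ β),
          c i S' * ∏ j ∈ S', zval (z j)) *
        (∑ S ∈ (N i).powerset.filter (fun S => S.card ≤ β),
          gcoef p S * ∏ j ∈ S, ((zval (z j) - p j) / (p j * (1 - p j))))) ^ 2) = 0 := by
      rw [bexp_congr p _ (fun _ => (0:ℝ)) (fun z => by rw [hfz z]; norm_num), bexp_const]
    have hL2 : bexp p (fun z => (1 / (n : ℝ)) * ∑ i,
        (∑ S' ∈ (N i).powerset.filter (fun S => S.card ≤ β),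
          c i S' * ∏ j ∈ S', zval (z j)) *
        (∑ S ∈ (N i).powerset.filter (fun S => S.card ≤ β),
          gcoef p S * ∏ j ∈ S, ((zval (z j) - p j) / (p j * (1 - p j))))) = 0 := by
      rw [bexp_congr p _ (fun _ => (0:ℝ)) (fun z => hfz z), bexp_const]
    rw [hL1, hL2]
    norm_num
    rcases hdeg with h | h
    · subst h
      rw [pow_zero, mul_one]
      positivity
    · subst h
      simp
  · push_neg at hdeg
    have hβ1 : 1 ≤ β := Nat.one_le_iff_ne_zero.mpr hdeg.1
    have hdin1 : 1 ≤ din := Nat.one_le_iff_ne_zero.mpr hdeg.2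
    set M : ℝ := max (4 * (β : ℝ) ^ 2) x with hM
    have hβR : (1:ℝ) ≤ (β:ℝ) := by exact_mod_cast hβ1
    have hM1 : (1:ℝ) ≤ M := le_trans (by norm_num) (le_trans hx4 (le_max_right _ _))
    have hMb : (β:ℝ) ≤ M := by
      refine le_trans ?_ (le_max_left _ _)
      nlinarith
    have hMx : x ≤ M := le_max_right _ _
    have hM0 : (0:ℝ) < M := lt_of_lt_of_le one_pos hM1
    set base : ℝ := (Real.exp 1 * (din : ℝ) / (β : ℝ)) * M with hbase
    have hbase0 : 0 ≤ base := by
      refine mul_nonneg ?_ hM0.le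
      positivity
    set K : ℝ := Ymax ^ 2 * base ^ β with hK
    have hKnn : 0 ≤ K := mul_nonneg (sq_nonneg _) (pow_nonneg hbase0 _)
    set D : ℝ := (din : ℝ) * (dout : ℝ) with hD
    -- the individual response functions
    have key := var_main p hp01 N
      (fun i z => (∑ S' ∈ (N i).powerset.filter (fun S => S.card ≤ β),
          c i S' * ∏ j ∈ S', zval (z j)) *
        (∑ S ∈ (N i).powerset.filter (fun S => S.card ≤ β),
          gcoef p S * ∏ j ∈ S, ((zval (z j) - p j) / (p j * (1 - p j)))))
      ?_ K D hKnn ?_ ?_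
    · refine le_trans key (le_of_eq ?_)
      have hne : (n:ℝ) ≠ 0 := Nat.cast_ne_zero.mpr hn.ne'
      rw [hK, hD, hbase]
      field_simp
    · -- dependence only on N i
      intro i z z' hzz
      have hcg : ∀ S : Finset (Fin n), S ∈ (N i).powerset.filter (fun S => S.card ≤ β) →
          S ⊆ N i := fun S hS => Finset.mem_powerset.mp (Finset.mem_filter.mp hS).1
      refine congrArg₂ (· * ·) ?_ ?_ <;>
        refine Finset.sum_congr rfl fun S hS => ?_
      · exact congrArg _ (Finset.prod_congr rfl fun j hj => by rw [hzz j (hcg S hS hj)])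
      · exact congrArg _ (Finset.prod_congr rfl fun j hj => by rw [hzz j (hcg S hS hj)])
    · -- second moment bound
      intro i
      have hYb : ∀ z : Fin n → Bool,
          |∑ S' ∈ (N i).powerset.filter (fun S => S.card ≤ β),
            c i S' * ∏ j ∈ S', zval (z j)| ≤ Ymax := by
        intro z
        calc |∑ S' ∈ (N i).powerset.filter (fun S => S.card ≤ β),
              c i S' * ∏ j ∈ S', zval (z j)|
            ≤ ∑ S' ∈ (N i).powerset.filter (fun S => S.card ≤ β),
              |c i S' * ∏ j ∈ S', zval (z j)| := Finset.abs_sum_le_sum_abs _ _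
          _ ≤ ∑ S' ∈ (N i).powerset.filter (fun S => S.card ≤ β), |c i S'| := by
              refine Finset.sum_le_sum fun S _ => ?_
              rw [abs_mul]
              have hzb : ∀ b : Bool, 0 ≤ zval b ∧ zval b ≤ 1 := by
                intro b; unfold zval; split <;> norm_num
              have hprod : |∏ j ∈ S, zval (z j)| ≤ 1 := by
                rw [Finset.abs_prod]
                exact Finset.prod_le_one (fun j _ => abs_nonneg _)
                  (fun j _ => by rw [abs_of_nonneg (hzb (z j)).1]; exact (hzb (z j)).2)
              exact mul_le_of_le_one_right (abs_nonneg _) hprod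
          _ ≤ Ymax := hY i
      have hstep1 : bexp p (fun z =>
          ((∑ S' ∈ (N i).powerset.filter (fun S => S.card ≤ β),
            c i S' * ∏ j ∈ S', zval (z j)) *
          (∑ S ∈ (N i).powerset.filter (fun S => S.card ≤ β),
            gcoef p S * ∏ j ∈ S, ((zval (z j) - p j) / (p j * (1 - p j))))) ^ 2)
          ≤ Ymax ^ 2 * bexp p (fun z =>
            (∑ S ∈ (N i).powerset.filter (fun S => S.card ≤ β),
              gcoef p S * ∏ j ∈ S, ((zval (z j) - p j) / (p j * (1 - p j)))) ^ 2) := by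
        rw [← bexp_const_mul]
        refine bexp_mono hp01 fun z => ?_
        rw [mul_pow]
        refine mul_le_mul_of_nonneg_right ?_ (sq_nonneg _)
        calc (∑ S' ∈ (N i).powerset.filter (fun S => S.card ≤ β),
              c i S' * ∏ j ∈ S', zval (z j)) ^ 2
            = |∑ S' ∈ (N i).powerset.filter (fun S => S.card ≤ β),
              c i S' * ∏ j ∈ S', zval (z j)| ^ 2 := (sq_abs _).symm
          _ ≤ Ymax ^ 2 := pow_le_pow_left₀ (abs_nonneg _) (hYb z) 2
      have hstep2 : bexp p (fun z =>
          (∑ S ∈ (N i).powerset.filter (fun S => S.card ≤ β),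
            gcoef p S * ∏ j ∈ S, ((zval (z j) - p j) / (p j * (1 - p j)))) ^ 2)
          = ∑ S ∈ (N i).powerset.filter (fun S => S.card ≤ β),
            (gcoef p S) ^ 2 * ∏ j ∈ S, (1 / (p j * (1 - p j))) := by
        have e1 : ∀ z : Fin n → Bool,
            (∑ S ∈ (N i).powerset.filter (fun S => S.card ≤ β),
              gcoef p S * ∏ j ∈ S, ((zval (z j) - p j) / (p j * (1 - p j)))) ^ 2
            = ∑ S ∈ (N i).powerset.filter (fun S => S.card ≤ β),
              ∑ S' ∈ (N i).powerset.filter (fun S => S.card ≤ β),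
              (gcoef p S * gcoef p S') *
              ((∏ j ∈ S, ((zval (z j) - p j) / (p j * (1 - p j)))) *
               (∏ j ∈ S', ((zval (z j) - p j) / (p j * (1 - p j))))) := by
          intro z
          rw [sq, Finset.sum_mul_sum]
          exact Finset.sum_congr rfl fun S _ => Finset.sum_congr rfl fun S' _ => by ring
        rw [bexp_congr p _ _ e1, bexp_sum]
        refine Finset.sum_congr rfl fun S hS => ?_
        rw [bexp_sum]
        have e2 : ∀ S' ∈ (N i).powerset.filter (fun S => S.card ≤ β),
            bexp p (fun z => (gcoef p S * gcoef p S') *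
              ((∏ j ∈ S, ((zval (z j) - p j) / (p j * (1 - p j)))) *
               (∏ j ∈ S', ((zval (z j) - p j) / (p j * (1 - p j))))))
            = (if S = S' then (gcoef p S * gcoef p S') *
                ∏ j ∈ S, (1 / (p j * (1 - p j))) else 0) := by
          intro S' _
          rw [bexp_const_mul, bexp_W p hp01' S S']
          by_cases h : S = S' <;> simp [h]
        rw [Finset.sum_congr rfl e2, Finset.sum_ite_eq]
        rw [if_pos hS]
        ring
      have hgle : ∀ S ∈ (N i).powerset.filter (fun S => S.card ≤ β),
          (gcoef p S) ^ 2 * ∏ j ∈ S, (1 / (p j * (1 - p j))) ≤ x ^ S.card := by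
        intro S _
        have hppos : ∀ j : Fin n, 0 < p j * (1 - p j) := fun j =>
          mul_pos (hp01' j).1 (by linarith [(hp01' j).2])
        have hple : ∀ j : Fin n, 1 / (p j * (1 - p j)) ≤ x := by
          intro j
          rw [hx]
          refine one_div_le_one_div_of_le hqq ?_
          nlinarith [(hp j).1, (hp j).2]
        have hprodle : ∏ j ∈ S, (1 / (p j * (1 - p j))) ≤ x ^ S.card := by
          rw [← Finset.prod_const]
          exact Finset.prod_le_prod (fun j _ => one_div_nonneg.mpr (hppos j).le)
            (fun j _ => hple j)
        have hprodnn : 0 ≤ ∏ j ∈ S, (1 / (p j * (1 - p j))) :=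
          Finset.prod_nonneg fun j _ => one_div_nonneg.mpr (hppos j).le
        calc (gcoef p S) ^ 2 * ∏ j ∈ S, (1 / (p j * (1 - p j)))
            ≤ 1 * (x ^ S.card) :=
              mul_le_mul (gcoef_sq_le_one p hp01 S) hprodle hprodnn zero_le_one
          _ = x ^ S.card := one_mul _
      have hsum_card : ∑ S ∈ (N i).powerset.filter (fun S => S.card ≤ β), x ^ S.card
          ≤ ∑ k ∈ Finset.range (β+1), (din.choose k : ℝ) * M ^ k := by
        have hPi : (N i).powerset.filter (fun S => S.card ≤ β)
            = (Finset.range (β+1)).biUnion (fun k => (N i).powersetCard k) := by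
          ext S
          simp only [Finset.mem_filter, Finset.mem_powerset, Finset.mem_biUnion,
            Finset.mem_range, Finset.mem_powersetCard, Nat.lt_succ_iff]
          constructor
          · rintro ⟨h1, h2⟩
            exact ⟨S.card, h2, h1, rfl⟩
          · rintro ⟨k, hk, h1, h2⟩
            exact ⟨h1, h2 ▸ hk⟩
        have hdisj : ((Finset.range (β+1) : Finset ℕ) : Set ℕ).PairwiseDisjoint
            (fun k => (N i).powersetCard k) := by
          intro k1 _ k2 _ hne
          simp only [Function.onFun, Finset.disjoint_left]
          intro S hS1 hS2
          rw [Finset.mem_powersetCard] at hS1 hS2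
          exact hne (hS1.2 ▸ hS2.2.symm ▸ rfl)
        rw [hPi, Finset.sum_biUnion hdisj]
        refine Finset.sum_le_sum fun k _ => ?_
        have e4 : ∑ S ∈ (N i).powersetCard k, x ^ S.card
            = ((N i).card.choose k : ℝ) * x ^ k := by
          rw [Finset.sum_congr rfl (fun S hS => by
            rw [(Finset.mem_powersetCard.mp hS).2])]
          rw [Finset.sum_const, nsmul_eq_mul, Finset.card_powersetCard]
        rw [e4]
        refine mul_le_mul ?_ ?_ (by positivity) (by positivity)
        · exact_mod_cast Nat.choose_le_choose k (hdin i)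
        · exact pow_le_pow_left₀ hx0.le hMx k
      have hlemA := lemA din β hdin1 hβ1 M hM1 hMb
      calc bexp p (fun z =>
          ((∑ S' ∈ (N i).powerset.filter (fun S => S.card ≤ β),
            c i S' * ∏ j ∈ S', zval (z j)) *
          (∑ S ∈ (N i).powerset.filter (fun S => S.card ≤ β),
            gcoef p S * ∏ j ∈ S, ((zval (z j) - p j) / (p j * (1 - p j))))) ^ 2)
          ≤ Ymax ^ 2 * bexp p (fun z =>
            (∑ S ∈ (N i).powerset.filter (fun S => S.card ≤ β),
              gcoef p S * ∏ j ∈ S, ((zval (z j) - p j) / (p j * (1 - p j)))) ^ 2) := hstep1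
        _ = Ymax ^ 2 * ∑ S ∈ (N i).powerset.filter (fun S => S.card ≤ β),
            (gcoef p S) ^ 2 * ∏ j ∈ S, (1 / (p j * (1 - p j))) := by rw [hstep2]
        _ ≤ Ymax ^ 2 * ∑ S ∈ (N i).powerset.filter (fun S => S.card ≤ β), x ^ S.card :=
            mul_le_mul_of_nonneg_left (Finset.sum_le_sum hgle) (sq_nonneg _)
        _ ≤ Ymax ^ 2 * ∑ k ∈ Finset.range (β+1), (din.choose k : ℝ) * M ^ k :=
            mul_le_mul_of_nonneg_left hsum_card (sq_nonneg _)
        _ ≤ Ymax ^ 2 * ((Real.exp 1 * din / β) * M) ^ β :=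
            mul_le_mul_of_nonneg_left hlemA (sq_nonneg _)
        _ = K := by rw [hK, hbase]
    · -- cardinality bound
      intro i
      have hsub : Finset.univ.filter (fun i' => (N i ∩ N i').Nonempty)
          ⊆ (N i).biUnion (fun j => Finset.univ.filter (fun i' => j ∈ N i')) := by
        intro i' hi'
        obtain ⟨j, hj⟩ := (Finset.mem_filter.mp hi').2
        rw [Finset.mem_inter] at hj
        exact Finset.mem_biUnion.mpr ⟨j, hj.1, Finset.mem_filter.mpr ⟨Finset.mem_univ _, hj.2⟩⟩
      have hc : (Finset.univ.filter (fun i' => (N i ∩ N i').Nonempty)).card ≤ din * dout := by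
        calc (Finset.univ.filter (fun i' => (N i ∩ N i').Nonempty)).card
            ≤ ((N i).biUnion (fun j => Finset.univ.filter (fun i' => j ∈ N i'))).card :=
              Finset.card_le_card hsub
          _ ≤ ∑ j ∈ N i, (Finset.univ.filter (fun i' => j ∈ N i')).card :=
              Finset.card_biUnion_le
          _ ≤ ∑ _j ∈ N i, dout := Finset.sum_le_sum fun j _ => hdout j
          _ = (N i).card * dout := by rw [Finset.sum_const, smul_eq_mul]
          _ ≤ din * dout := Nat.mul_le_mul_right _ (hdin i)
      rw [hD]
      calc ((Finset.univ.filter (fun i' => (N i ∩ N i').Nonempty)).card : ℝ)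
          ≤ ((din * dout : ℕ) : ℝ) := by exact_mod_cast hc
        _ = (din : ℝ) * (dout : ℝ) := by push_cast; ring
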